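/- arXiv:2406.00376 — 4 statements merged into one kernel-verified Lean document; each statement's English description precedes it below -/
import Mathlib

section
/- Let X_1,...,X_n be random variables such that each X_i takes values in {0, s_i} with 0 ≤ s_i ≤ 1, and the conditional probability Pr[X_i = s_i | X_1,...,X_{i-1}] ≤ p. Let X = Σ X_i and μ = p·Σ s_i. Then for any Δ > 0, Pr[X > (1+Δ)μ] ≤ exp(-(Δ-(e-2))·μ). -/
open MeasureTheory Real

/-- Concentration bound for a sum of random variables `X i ∈ {0, s i}` with
`0 ≤ s i ≤ 1` and conditional probability `Pr[X i = s i | X 0, …, X (i-1)] ≤ p`: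
for `μ₀ = p · Σ s i` and any `Δ > 0`,
`Pr[Σ X i > (1+Δ)·μ₀] ≤ exp (-(Δ - (e-2))·μ₀)`. -/
theorem conditional_chernoff_bound {Ω : Type*} [MeasurableSpace Ω]
    (μ : Measure Ω) [IsProbabilityMeasure μ]
    (n : ℕ) (X : ℕ → Ω → ℝ) (hXm : ∀ i, Measurable (X i))
    (s : ℕ → ℝ) (hs0 : ∀ i, 0 ≤ s i) (hs1 : ∀ i, s i ≤ 1)
    (hval : ∀ i, ∀ ω, X i ω = 0 ∨ X i ω = s i)
    (p : ℝ) (hp0 : 0 ≤ p)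
    (hcond : ∀ i < n, ∀ A : Set Ω,
      MeasurableSet[MeasurableSpace.comap (fun ω (j : Fin i) => X j ω)
        (MeasurableSpace.pi)] A →
      μ ({ω | X i ω = s i} ∩ A) ≤ ENNReal.ofReal p * μ A)
    (Δ : ℝ) (hΔ : 0 < Δ) :
    (μ {ω | (1 + Δ) * (p * ∑ i ∈ Finset.range n, s i) <
        ∑ i ∈ Finset.range n, X i ω}).toReal ≤
      exp (-(Δ - (exp 1 - 2)) * (p * ∑ i ∈ Finset.range n, s i)) := by
  classical
  set A : ℕ → Set Ω := fun i => {ω | X i ω = s i} with hA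
  have hAmeas : ∀ i, MeasurableSet (A i) := fun i => (hXm i) (measurableSet_singleton (s i))
  set c : ℕ → ENNReal := fun i => ENNReal.ofReal (Real.exp (s i) - 1) with hc
  set f : ℕ → Ω → ENNReal := fun i ω => 1 + c i * (A i).indicator 1 ω with hf
  set g : ℕ → Ω → ENNReal := fun k ω => ∏ i ∈ Finset.range k, f i ω with hg
  have hfmeas : ∀ i, Measurable (f i) := by
    intro i
    exact measurable_const.add (((measurable_one.indicator (hAmeas i))).const_mul (c i))
  have hgmeas : ∀ k, Measurable (g k) :=
    fun k => Finset.measurable_prod _ (fun i _ => hfmeas i)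
  -- splitting lemma
  have split : ∀ k (S : Set Ω), MeasurableSet S →
      ∫⁻ ω in S, g (k+1) ω ∂μ
        = ∫⁻ ω in S, g k ω ∂μ + c k * ∫⁻ ω in S ∩ A k, g k ω ∂μ := by
    intro k S hS
    have hpt : ∀ ω, g (k+1) ω = g k ω + c k * (A k).indicator (g k) ω := by
      intro ω
      simp only [hg, Finset.prod_range_succ]
      by_cases h : ω ∈ A k
      · simp only [hf, Set.indicator_of_mem h, Pi.one_apply, mul_one]
        ring
      · simp [hf, Set.indicator_of_notMem h]
    simp_rw [hpt]
    rw [lintegral_add_left (hgmeas k),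
      lintegral_const_mul _ ((hgmeas k).indicator (hAmeas k)),
      lintegral_indicator (hAmeas k), Measure.restrict_restrict (hAmeas k),
      Set.inter_comm (A k) S]
  -- comap measurability of A j for j < m
  have hAcomap : ∀ m, ∀ j < m,
      MeasurableSet[MeasurableSpace.comap (fun ω (j : Fin m) => X j ω)
        (MeasurableSpace.pi)] (A j) := by
    intro m j hj
    refine MeasurableSpace.measurableSet_comap.2
      ⟨{v : Fin m → ℝ | v ⟨j, hj⟩ = s j}, ?_, rfl⟩
    have hm : Measurable (fun v : Fin m → ℝ => v ⟨j, hj⟩) := measurable_pi_apply _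
    exact hm (measurableSet_singleton (s j))
  -- key conditional bound
  have key : ∀ k, ∀ m, k ≤ m → m < n → ∀ B : Set Ω,
      MeasurableSet[MeasurableSpace.comap (fun ω (j : Fin m) => X j ω)
        (MeasurableSpace.pi)] B →
      ∫⁻ ω in A m ∩ B, g k ω ∂μ ≤ ENNReal.ofReal p * ∫⁻ ω in B, g k ω ∂μ := by
    intro k
    induction k with
    | zero =>
      intro m hkm hmn B hB
      have hg0 : g 0 = fun _ => 1 := by funext ω; simp [hg]
      rw [hg0]
      simp only [setLIntegral_one]
      exact hcond m hmn B hB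
    | succ k ih =>
      intro m hkm hmn B hB
      have hφ : Measurable (fun ω (j : Fin m) => X j ω) :=
        measurable_pi_lambda _ (fun j => hXm j)
      have hBmeas : MeasurableSet B := hφ.comap_le _ hB
      have hABmeas : MeasurableSet (A m ∩ B) := (hAmeas m).inter hBmeas
      have hkm' : k < m := hkm
      have hBk : MeasurableSet[MeasurableSpace.comap (fun ω (j : Fin m) => X j ω)
          (MeasurableSpace.pi)] (B ∩ A k) := hB.inter (hAcomap m k hkm')
      have hBkmeas : MeasurableSet (B ∩ A k) := hBmeas.inter (hAmeas k)
      rw [split k (A m ∩ B) hABmeas, split k B hBmeas]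
      have e1 : A m ∩ B ∩ A k = A m ∩ (B ∩ A k) := by
        rw [Set.inter_assoc]
      rw [e1, mul_add]
      refine add_le_add (ih m (le_of_lt hkm') hmn B hB) ?_
      rw [← mul_assoc, mul_comm (ENNReal.ofReal p) (c k), mul_assoc]
      exact mul_le_mul_right (ih m (le_of_lt hkm') hmn (B ∩ A k) hBk) (c k)
  -- total expectation bound
  have tot : ∀ k, k ≤ n →
      ∫⁻ ω, g k ω ∂μ ≤ ∏ i ∈ Finset.range k, (1 + ENNReal.ofReal p * c i) := by
    intro k
    induction k with
    | zero =>
      intro _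
      simp [hg]
    | succ k ih =>
      intro hkn
      have hkn' : k < n := hkn
      have h1 : ∫⁻ ω, g (k+1) ω ∂μ
          = ∫⁻ ω, g k ω ∂μ + c k * ∫⁻ ω in A k, g k ω ∂μ := by
        have := split k Set.univ MeasurableSet.univ
        simpa [Measure.restrict_univ, Set.univ_inter] using this
      have h2 : ∫⁻ ω in A k, g k ω ∂μ ≤ ENNReal.ofReal p * ∫⁻ ω, g k ω ∂μ := by
        have := key k k le_rfl hkn' Set.univ MeasurableSet.univ
        simpa [Measure.restrict_univ, Set.inter_univ] using this
      calc ∫⁻ ω, g (k+1) ω ∂μ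
          = ∫⁻ ω, g k ω ∂μ + c k * ∫⁻ ω in A k, g k ω ∂μ := h1
        _ ≤ ∫⁻ ω, g k ω ∂μ + c k * (ENNReal.ofReal p * ∫⁻ ω, g k ω ∂μ) :=
            add_le_add_right (mul_le_mul_right h2 (c k)) _
        _ = (1 + ENNReal.ofReal p * c k) * ∫⁻ ω, g k ω ∂μ := by ring
        _ ≤ (1 + ENNReal.ofReal p * c k) * ∏ i ∈ Finset.range k, (1 + ENNReal.ofReal p * c i) :=
            mul_le_mul_right (ih (le_of_lt hkn')) _
        _ = ∏ i ∈ Finset.range (k+1), (1 + ENNReal.ofReal p * c i) := by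
            rw [Finset.prod_range_succ]; ring
  -- pointwise identity  exp (∑ X) = g n
  have hpt : ∀ ω, ENNReal.ofReal (Real.exp (∑ i ∈ Finset.range n, X i ω)) = g n ω := by
    intro ω
    rw [Real.exp_sum, ENNReal.ofReal_prod_of_nonneg (fun i _ => (Real.exp_pos _).le)]
    refine Finset.prod_congr rfl (fun i _ => ?_)
    rcases hval i ω with h0 | h1
    · by_cases h : ω ∈ A i
      · have hsi : s i = 0 := by
          have : X i ω = s i := h
          rw [h0] at this; exact this.symm
        simp [hf, hc, h, hsi, h0]
      · simp [hf, h, h0]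
    · have h : ω ∈ A i := h1
      have hexp1 : (1:ℝ) ≤ Real.exp (s i) := by
        rw [← Real.exp_zero]; exact Real.exp_le_exp.2 (hs0 i)
      simp only [hf, Set.indicator_of_mem h, Pi.one_apply, mul_one, h1, hc]
      rw [← ENNReal.ofReal_one, ← ENNReal.ofReal_add zero_le_one (by linarith)]
      norm_num
  -- real product bound
  have hprod : ∏ i ∈ Finset.range n, (1 + ENNReal.ofReal p * c i)
      ≤ ENNReal.ofReal (Real.exp ((Real.exp 1 - 1) * (p * ∑ i ∈ Finset.range n, s i))) := by
    have hfac : ∀ i ∈ Finset.range n, (1 + ENNReal.ofReal p * c i)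
        = ENNReal.ofReal (1 + p * (Real.exp (s i) - 1)) := by
      intro i _
      have hnn : (0:ℝ) ≤ Real.exp (s i) - 1 := by
        have : (1:ℝ) ≤ Real.exp (s i) := by
          rw [← Real.exp_zero]; exact Real.exp_le_exp.2 (hs0 i)
        linarith
      rw [hc, ← ENNReal.ofReal_mul hp0, ← ENNReal.ofReal_one,
        ← ENNReal.ofReal_add zero_le_one (mul_nonneg hp0 hnn)]
    have hfnn : ∀ i, (0:ℝ) ≤ 1 + p * (Real.exp (s i) - 1) := by
      intro i
      have : (1:ℝ) ≤ Real.exp (s i) := by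
        rw [← Real.exp_zero]; exact Real.exp_le_exp.2 (hs0 i)
      nlinarith
    rw [Finset.prod_congr rfl hfac,
      ← ENNReal.ofReal_prod_of_nonneg (fun i _ => hfnn i)]
    apply ENNReal.ofReal_le_ofReal
    have step1 : ∏ i ∈ Finset.range n, (1 + p * (Real.exp (s i) - 1))
        ≤ ∏ i ∈ Finset.range n, Real.exp (p * (Real.exp (s i) - 1)) := by
      refine Finset.prod_le_prod (fun i _ => hfnn i) (fun i _ => ?_)
      have := Real.add_one_le_exp (p * (Real.exp (s i) - 1))
      linarith
    refine step1.trans ?_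
    rw [← Real.exp_sum]
    apply Real.exp_le_exp.2
    calc ∑ i ∈ Finset.range n, p * (Real.exp (s i) - 1)
        ≤ ∑ i ∈ Finset.range n, p * ((Real.exp 1 - 1) * s i) := by
          refine Finset.sum_le_sum (fun i _ => ?_)
          refine mul_le_mul_of_nonneg_left ?_ hp0
          have hcv := convexOn_exp.2 (Set.mem_univ (0:ℝ)) (Set.mem_univ (1:ℝ))
            (by linarith [hs1 i] : (0:ℝ) ≤ 1 - s i) (hs0 i) (by ring)
          simp only [smul_eq_mul, mul_zero, mul_one, zero_add, Real.exp_zero] at hcv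
          nlinarith [hcv]
      _ = (Real.exp 1 - 1) * (p * ∑ i ∈ Finset.range n, s i) := by
          rw [Finset.mul_sum, Finset.mul_sum]
          exact Finset.sum_congr rfl (fun i _ => by ring)
  -- Markov
  set μ₀ : ℝ := p * ∑ i ∈ Finset.range n, s i with hμ₀
  have hμ₀nn : 0 ≤ μ₀ := mul_nonneg hp0 (Finset.sum_nonneg (fun i _ => hs0 i))
  set a : ENNReal := ENNReal.ofReal (Real.exp ((1 + Δ) * μ₀)) with ha
  have ha0 : a ≠ 0 := by
    simp [ha, ENNReal.ofReal_eq_zero, not_le, Real.exp_pos]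
  have haT : a ≠ ⊤ := ENNReal.ofReal_ne_top
  have hsub : {ω | (1 + Δ) * μ₀ < ∑ i ∈ Finset.range n, X i ω}
      ⊆ {ω | a ≤ g n ω} := by
    intro ω hω
    have : Real.exp ((1 + Δ) * μ₀) ≤ Real.exp (∑ i ∈ Finset.range n, X i ω) :=
      Real.exp_le_exp.2 (le_of_lt hω)
    calc a ≤ ENNReal.ofReal (Real.exp (∑ i ∈ Finset.range n, X i ω)) :=
        ENNReal.ofReal_le_ofReal this
      _ = g n ω := hpt ω
  have hmarkov : μ {ω | (1 + Δ) * μ₀ < ∑ i ∈ Finset.range n, X i ω}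
      ≤ (∫⁻ ω, g n ω ∂μ) / a :=
    (measure_mono hsub).trans
      (meas_ge_le_lintegral_div (hgmeas n).aemeasurable ha0 haT)
  have hfinal : μ {ω | (1 + Δ) * μ₀ < ∑ i ∈ Finset.range n, X i ω}
      ≤ ENNReal.ofReal (Real.exp (-(Δ - (Real.exp 1 - 2)) * μ₀)) := by
    refine hmarkov.trans ?_
    have h1 : (∫⁻ ω, g n ω ∂μ) / a
        ≤ ENNReal.ofReal (Real.exp ((Real.exp 1 - 1) * μ₀)) / a :=
      ENNReal.div_le_div_right ((tot n le_rfl).trans hprod) a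
    refine h1.trans ?_
    rw [ha, ← ENNReal.ofReal_div_of_pos (Real.exp_pos _), ← Real.exp_sub]
    apply ENNReal.ofReal_le_ofReal
    apply Real.exp_le_exp.2
    nlinarith
  exact ENNReal.toReal_le_of_le_ofReal (Real.exp_nonneg _) hfinal
end

section
/- Let X_1,...,X_n be random variables with X_i ∈ {0, s_i}, 0 ≤ s_i ≤ 1, and Pr[X_i = s_i | X_1,...,X_{i-1}] ≤ p. Then E[e^{X_1+...+X_n}] ≤ Π_{i=1}^n (1 + p(e^{s_i} - 1)). -/
open MeasureTheory Real

/-- Moment-generating-function bound: if `X i ∈ {0, s i}` with `0 ≤ s i ≤ 1`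
and `Pr[X i = s i | X 0, …, X (i-1)] ≤ p`, then
`E[exp (X 0 + ⋯ + X (n-1))] ≤ Π i, (1 + p·(exp (s i) - 1))`. -/
theorem conditional_mgf_bound {Ω : Type*} [MeasurableSpace Ω]
    (μ : Measure Ω) [IsProbabilityMeasure μ]
    (n : ℕ) (X : ℕ → Ω → ℝ) (hXm : ∀ i, Measurable (X i))
    (s : ℕ → ℝ) (hs0 : ∀ i, 0 ≤ s i) (hs1 : ∀ i, s i ≤ 1)
    (hval : ∀ i, ∀ ω, X i ω = 0 ∨ X i ω = s i)
    (p : ℝ) (hp0 : 0 ≤ p)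
    (hcond : ∀ i < n, ∀ A : Set Ω,
      MeasurableSet[MeasurableSpace.comap (fun ω (j : Fin i) => X j ω)
        (MeasurableSpace.pi)] A →
      μ ({ω | X i ω = s i} ∩ A) ≤ ENNReal.ofReal p * μ A) :
    ∫ ω, exp (∑ i ∈ Finset.range n, X i ω) ∂μ ≤
      ∏ i ∈ Finset.range n, (1 + p * (exp (s i) - 1)) := by
  classical
  set A : ℕ → Set Ω := fun i => {ω | X i ω = s i} with hA
  have hAm : ∀ i, MeasurableSet (A i) := fun i => (hXm i) (measurableSet_singleton (s i))
  set c : ℕ → ℝ := fun i => exp (s i) - 1 with hc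
  have hc0 : ∀ i, 0 ≤ c i := fun i => sub_nonneg.2 (one_le_exp (hs0 i))
  -- key measure bound
  have key : ∀ t : Finset ℕ, (∀ i ∈ t, i < n) →
      μ (⋂ i ∈ t, A i) ≤ ENNReal.ofReal p ^ t.card := by
    intro t
    induction t using Finset.induction_on_max with
    | empty => intro _; simp
    | insert a t ha ih =>
      intro hlt
      have hat : a ∉ t := fun h => lt_irrefl a (ha a h)
      have hB : MeasurableSet[MeasurableSpace.comap (fun ω (j : Fin a) => X j ω)
          MeasurableSpace.pi] (⋂ i ∈ t, A i) := by
        apply Finset.measurableSet_biInter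
        intro i hi
        have hia : i < a := ha i hi
        refine ⟨(fun f : Fin a → ℝ => f ⟨i, hia⟩) ⁻¹' {s i},
          (measurable_pi_apply _) (measurableSet_singleton _), ?_⟩
        ext ω; simp [hA]
      have h1 : μ (A a ∩ ⋂ i ∈ t, A i) ≤ ENNReal.ofReal p * μ (⋂ i ∈ t, A i) :=
        hcond a (hlt a (Finset.mem_insert_self a t)) _ hB
      calc μ (⋂ i ∈ insert a t, A i) = μ (A a ∩ ⋂ i ∈ t, A i) := by
              rw [Finset.set_biInter_insert]
        _ ≤ ENNReal.ofReal p * μ (⋂ i ∈ t, A i) := h1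
        _ ≤ ENNReal.ofReal p * ENNReal.ofReal p ^ t.card := by
              exact mul_le_mul_right (ih (fun i hi => hlt i (Finset.mem_insert_of_mem hi))) _
        _ = ENNReal.ofReal p ^ (insert a t).card := by
              rw [Finset.card_insert_of_notMem hat, pow_succ, mul_comm]
  have keyR : ∀ t : Finset ℕ, (∀ i ∈ t, i < n) →
      (μ (⋂ i ∈ t, A i)).toReal ≤ p ^ t.card := by
    intro t ht
    have := key t ht
    rw [← ENNReal.ofReal_pow hp0] at this
    calc (μ (⋂ i ∈ t, A i)).toReal ≤ (ENNReal.ofReal (p ^ t.card)).toReal :=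
          ENNReal.toReal_mono ENNReal.ofReal_ne_top this
      _ = p ^ t.card := ENNReal.toReal_ofReal (pow_nonneg hp0 _)
  -- pointwise identity
  have hpt : ∀ ω, exp (∑ i ∈ Finset.range n, X i ω) =
      ∑ t ∈ (Finset.range n).powerset,
        (∏ i ∈ t, c i) * (⋂ i ∈ t, A i).indicator (fun _ => (1:ℝ)) ω := by
    intro ω
    have h1 : exp (∑ i ∈ Finset.range n, X i ω) =
        ∏ i ∈ Finset.range n, (c i * (A i).indicator (fun _ => (1:ℝ)) ω + 1) := by
      rw [exp_sum]
      refine Finset.prod_congr rfl fun i _ => ?_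
      by_cases h : ω ∈ A i
      · rw [Set.indicator_of_mem h]
        have : X i ω = s i := h
        rw [this]; simp [hc]
      · rw [Set.indicator_of_notMem h]
        have : X i ω = 0 := (hval i ω).resolve_right h
        rw [this]; simp
    rw [h1, Finset.prod_add]
    refine Finset.sum_congr rfl fun t ht => ?_
    simp only [Finset.prod_const_one, mul_one]
    rw [Finset.prod_mul_distrib]
    congr 1
    by_cases h : ω ∈ ⋂ i ∈ t, A i
    · rw [Set.indicator_of_mem h]
      refine Finset.prod_eq_one fun i hi => ?_
      rw [Set.indicator_of_mem (by exact Set.mem_iInter₂.1 h i hi)]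
    · rw [Set.indicator_of_notMem h]
      rw [Set.mem_iInter₂] at h
      push_neg at h
      obtain ⟨i, hi, hni⟩ := h
      refine Finset.prod_eq_zero hi ?_
      rw [Set.indicator_of_notMem hni]
  -- integrate
  have hint : ∀ t : Finset ℕ, Integrable
      (fun ω => (∏ i ∈ t, c i) * (⋂ i ∈ t, A i).indicator (fun _ => (1:ℝ)) ω) μ := by
    intro t
    exact ((integrable_const (1:ℝ)).indicator
      (Finset.measurableSet_biInter t fun i _ => hAm i)).const_mul _
  calc ∫ ω, exp (∑ i ∈ Finset.range n, X i ω) ∂μ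
      = ∑ t ∈ (Finset.range n).powerset, ∫ ω, (∏ i ∈ t, c i) *
          (⋂ i ∈ t, A i).indicator (fun _ => (1:ℝ)) ω ∂μ := by
        simp_rw [hpt]
        rw [integral_finset_sum _ (fun t _ => hint t)]
    _ = ∑ t ∈ (Finset.range n).powerset, (∏ i ∈ t, c i) * (μ (⋂ i ∈ t, A i)).toReal := by
        refine Finset.sum_congr rfl fun t ht => ?_
        rw [integral_const_mul, integral_indicator_const (1:ℝ)
          (Finset.measurableSet_biInter t fun i _ => hAm i)]
        rw [smul_eq_mul, mul_one]
        rfl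
    _ ≤ ∑ t ∈ (Finset.range n).powerset, (∏ i ∈ t, c i) * p ^ t.card := by
        refine Finset.sum_le_sum fun t ht => ?_
        have ht' : ∀ i ∈ t, i < n := fun i hi =>
          Finset.mem_range.1 (Finset.mem_powerset.1 ht hi)
        exact mul_le_mul_of_nonneg_left (keyR t ht')
          (Finset.prod_nonneg fun i _ => hc0 i)
    _ = ∏ i ∈ Finset.range n, (1 + p * (exp (s i) - 1)) := by
        have : ∀ i, 1 + p * (exp (s i) - 1) = p * c i + 1 := by
          intro i; simp [hc]; ring
        simp_rw [this]
        rw [Finset.prod_add]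
        refine (Finset.sum_congr rfl fun t ht => ?_).symm
        simp only [Finset.prod_const_one, mul_one]
        rw [Finset.prod_mul_distrib, Finset.prod_const]
        ring
end

section
/- Consider a bucket with fields (ID, YES, NO), initially (null, 0, 0). On inserting a key-value pair ⟨e, v⟩ with v ≥ 0: if e = ID then YES increases by v; otherwise NO increases by v, and if afterwards NO ≥ YES, then ID is set to e and YES and NO are swapped. Then at all times, for the key e₀ currently stored as ID, the true inserted total f(e₀) satisfies YES - NO ≤ f(e₀) ≤ YES. -/
/-- State of an error-sensible bucket: candidate key (if any), YES counter, NO counter. -/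
structure Bucket (K : Type) where
  id : Option K
  yes : ℝ
  no : ℝ

/-- Weighted majority-vote insertion of one key-value pair. -/
noncomputable def Bucket.insert {K : Type} [DecidableEq K] (b : Bucket K) (p : K × ℝ) : Bucket K :=
  if some p.1 = b.id then
    { b with yes := b.yes + p.2 }
  else
    let no' := b.no + p.2
    if b.yes ≤ no' then ⟨some p.1, no', b.yes⟩ else { b with no := no' }

/-- The empty bucket. -/
def Bucket.init (K : Type) : Bucket K := ⟨none, 0, 0⟩

/-- Final bucket state after inserting a stream of key-value pairs. -/
noncomputable def Bucket.run {K : Type} [DecidableEq K] (L : List (K × ℝ)) : Bucket K :=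
  L.foldl Bucket.insert (Bucket.init K)

/-- The true total value inserted with key `e₀` in the stream `L`. -/
def streamCount {K : Type} [DecidableEq K] (L : List (K × ℝ)) (e₀ : K) : ℝ :=
  (L.map (fun p => if p.1 = e₀ then p.2 else 0)).sum

lemma bucket_aux {K : Type} [DecidableEq K] :
    ∀ (L : List (K × ℝ)) (b : Bucket K) (f : K → ℝ),
    (∀ p ∈ L, 0 ≤ p.2) → (∀ e, 0 ≤ f e) → 0 ≤ b.no → b.no ≤ b.yes →
    (∀ e, b.id = some e → b.yes - b.no ≤ f e ∧ f e ≤ b.yes) →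
    (∀ e, b.id ≠ some e → f e ≤ b.no) →
    ∀ e, (L.foldl Bucket.insert b).id = some e →
      (L.foldl Bucket.insert b).yes - (L.foldl Bucket.insert b).no ≤ f e + streamCount L e ∧
        f e + streamCount L e ≤ (L.foldl Bucket.insert b).yes := by
  intro L
  induction L with
  | nil =>
    intro b f _ _ _ _ hcand _ e he
    simpa [streamCount] using hcand e he
  | cons p L ih =>
    intro b f hv hf hno hny hcand hnon e he
    have hp : 0 ≤ p.2 := hv p List.mem_cons_self
    have hv' : ∀ q ∈ L, 0 ≤ q.2 := fun q hq => hv q (List.mem_cons_of_mem _ hq)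
    set f' : K → ℝ := fun e => f e + (if p.1 = e then p.2 else 0) with hf'def
    have hf' : ∀ e, 0 ≤ f' e := by
      intro e; dsimp only [f']; split <;> [linarith [hf e]; simpa using hf e]
    have hsc : streamCount (p :: L) e = (if p.1 = e then p.2 else 0) + streamCount L e := by
      simp [streamCount]
    rw [List.foldl_cons] at he ⊢
    rw [hsc]
    have hf'e : f' e = f e + (if p.1 = e then p.2 else 0) := rfl
    by_cases h1 : some p.1 = b.id
    · have hb : b.insert p = { b with yes := b.yes + p.2 } := by
        simp [Bucket.insert, h1]
      have key := ih (b.insert p) f' hv' hf'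
        (by rw [hb]; exact hno) (by rw [hb]; dsimp only; linarith)
        (by
          intro e' he'
          rw [hb] at he' ⊢
          dsimp only at he' ⊢
          obtain ⟨h2, h3⟩ := hcand e' he'
          have hpe : p.1 = e' := Option.some_injective _ (h1.trans he')
          dsimp only [f']
          rw [if_pos hpe]
          constructor <;> linarith)
        (by
          intro e' he'
          rw [hb] at he' ⊢
          dsimp only at he' ⊢
          have hpe : p.1 ≠ e' := by
            intro hc; subst hc; exact he' h1.symm
          dsimp only [f']; rw [if_neg hpe, add_zero]
          exact hnon e' he')
        e he
      rw [hf'e] at key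
      constructor <;> linarith [key.1, key.2]
    · by_cases h2 : b.yes ≤ b.no + p.2
      · have hb : b.insert p = ⟨some p.1, b.no + p.2, b.yes⟩ := by
          simp [Bucket.insert, h1, h2]
        have key := ih (b.insert p) f' hv' hf'
          (by rw [hb]; dsimp only; linarith) (by rw [hb]; dsimp only; linarith)
          (by
            intro e' he'
            rw [hb] at he' ⊢
            dsimp only at he' ⊢
            have hpe : p.1 = e' := Option.some_injective _ he'
            have hne : f e' ≤ b.no := by
              apply hnon; rw [← hpe]; exact fun hc => h1 hc.symm
            dsimp only [f']; rw [if_pos hpe]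
            constructor <;> linarith [hf e'])
          (by
            intro e' he'
            rw [hb] at he' ⊢
            dsimp only at he' ⊢
            have hpe : p.1 ≠ e' := fun hc => he' (by rw [hc])
            dsimp only [f']; rw [if_neg hpe, add_zero]
            by_cases hc : b.id = some e'
            · exact (hcand e' hc).2
            · exact le_trans (hnon e' hc) hny)
          e he
        rw [hf'e] at key
        constructor <;> linarith [key.1, key.2]
      · have hb : b.insert p = { b with no := b.no + p.2 } := by
          simp [Bucket.insert, h1, h2]
        have key := ih (b.insert p) f' hv' hf'
          (by rw [hb]; dsimp only; linarith) (by rw [hb]; dsimp only; linarith)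
          (by
            intro e' he'
            rw [hb] at he' ⊢
            dsimp only at he' ⊢
            obtain ⟨h3, h4⟩ := hcand e' he'
            have hpe : p.1 ≠ e' := by
              intro hc; subst hc; rw [he'] at h1; exact h1 rfl
            dsimp only [f']; rw [if_neg hpe, add_zero]
            constructor <;> linarith)
          (by
            intro e' he'
            rw [hb] at he' ⊢
            dsimp only at he' ⊢
            by_cases hpe : p.1 = e'
            · dsimp only [f']; rw [if_pos hpe]
              have := hnon e' (by rw [← hpe]; exact fun hc => h1 hc.symm)
              linarith
            · dsimp only [f']; rw [if_neg hpe, add_zero]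
              exact le_trans (hnon e' he') (by linarith))
          e he
        rw [hf'e] at key
        constructor <;> linarith [key.1, key.2]

theorem bucket_candidate_bounds {K : Type} [DecidableEq K]
    (L : List (K × ℝ)) (hv : ∀ p ∈ L, 0 ≤ p.2) (e₀ : K)
    (hid : (Bucket.run L).id = some e₀) :
    (Bucket.run L).yes - (Bucket.run L).no ≤ streamCount L e₀ ∧
      streamCount L e₀ ≤ (Bucket.run L).yes := by
  have h := bucket_aux L (Bucket.init K) (fun _ => 0) hv (fun _ => le_refl 0)
    le_rfl le_rfl
    (by intro e he; simp [Bucket.init] at he)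
    (by intro e _; simp [Bucket.init]) e₀ hid
  simpa [Bucket.run] using h
end

section
/- Let Λ, N > 0, R_w, R_λ with R_w·R_λ ≥ 2 and R_λ > 1, and define d as the root of R_λ^d / (R_w R_λ)^{2^d + d} = Δ₁·(Λ/N)·ln(1/Δ) for constants Δ₁ > 0 and 0 < Δ < 1. Then d = O(ln ln(N/Λ)) as N/Λ → ∞ with the other parameters fixed; more precisely, d ≤ log₂(log_{R_w R_λ}(N/(Δ₁ Λ ln(1/Δ)))) + 1 for N/Λ sufficiently large. -/
open Real

set_option maxHeartbeats 1000000 in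
/-- The number of layers `d`, defined as the root of
`Rλ^d / (Rw·Rλ)^(2^d + d) = Δ₁·(Λ/N)·ln(1/Δ)`, grows doubly
logarithmically in `N/Λ`: for `N/Λ` sufficiently large,
`d ≤ log₂ (log_{Rw·Rλ} (N / (Δ₁·Λ·ln(1/Δ)))) + 1`. -/
theorem num_layers_doubly_log (Rw Rl Δ₁ Δ : ℝ)
    (hR : 2 ≤ Rw * Rl) (hRl : 1 < Rl) (hΔ₁ : 0 < Δ₁)
    (hΔ0 : 0 < Δ) (hΔ1 : Δ < 1) :
    ∃ M : ℝ, ∀ N Λ d : ℝ, 0 < Λ → 0 < N → M ≤ N / Λ →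
      Rl ^ d / (Rw * Rl) ^ ((2 : ℝ) ^ d + d) = Δ₁ * (Λ / N) * Real.log (1 / Δ) →
      d ≤ Real.logb 2 (Real.logb (Rw * Rl) (N / (Δ₁ * Λ * Real.log (1 / Δ)))) + 1 := by
  set R := Rw * Rl with hRdef
  have hR1 : (1:ℝ) < R := by linarith
  have hR0 : (0:ℝ) < R := by linarith
  have hlogR : 0 < Real.log R := Real.log_pos hR1
  have hlog2 : 0 < Real.log 2 := Real.log_pos one_lt_two
  set c := Real.log Rl / Real.log R with hc
  have hc0 : 0 < c := div_pos (Real.log_pos hRl) hlogR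
  set L₀ : ℝ := max 1 ((c - 1) * (8 * (c - 1) / (Real.log 2) ^ 2)) with hL0
  have hL01 : (1:ℝ) ≤ L₀ := le_max_left _ _
  have hlogΔ : 0 < Real.log (1 / Δ) := Real.log_pos (by rw [lt_div_iff₀ hΔ0]; linarith)
  refine ⟨Δ₁ * Real.log (1 / Δ) * R ^ L₀, ?_⟩
  intro N Λ d hΛ hN hM heq
  have hε0 : 0 < Δ₁ * (Λ / N) * Real.log (1 / Δ) := by positivity
  set ε := Δ₁ * (Λ / N) * Real.log (1 / Δ) with hεdef
  have hinv : N / (Δ₁ * Λ * Real.log (1 / Δ)) = 1 / ε := by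
    rw [hεdef]; field_simp
  set L := Real.logb R (1 / ε) with hLdef
  have hRL0pos : 0 < R ^ L₀ := Real.rpow_pos_of_pos hR0 _
  -- `1/ε ≥ R^L₀`
  have h1ε : R ^ L₀ ≤ 1 / ε := by
    rw [le_div_iff₀ hε0]
    have h2 := mul_le_mul_of_nonneg_right hM (le_of_lt (div_pos hΛ hN))
    have h3 : N / Λ * (Λ / N) = 1 := by field_simp
    rw [h3] at h2
    calc R ^ L₀ * ε = Δ₁ * Real.log (1 / Δ) * R ^ L₀ * (Λ / N) := by
          rw [hεdef]; ring
      _ ≤ 1 := h2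
  have hLL : L₀ ≤ L := by
    have := (Real.logb_le_logb hR1 hRL0pos (lt_of_lt_of_le hRL0pos h1ε)).mpr h1ε
    rwa [Real.logb_rpow hR0 (ne_of_gt hR1)] at this
  have hL1 : (1:ℝ) ≤ L := le_trans hL01 hLL
  -- key equation : 2^d + d - d*c = L
  have hRlpos : (0:ℝ) < Rl := lt_trans one_pos hRl
  have h1 : d * Real.log Rl - ((2:ℝ) ^ d + d) * Real.log R = Real.log ε := by
    rw [← heq, Real.log_div (ne_of_gt (Real.rpow_pos_of_pos hRlpos d))
      (ne_of_gt (Real.rpow_pos_of_pos hR0 _)), Real.log_rpow hRlpos, Real.log_rpow hR0]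
  have h2 : Real.log ε = -(L * Real.log R) := by
    have : L * Real.log R = Real.log (1 / ε) := by
      rw [hLdef, Real.logb, div_mul_cancel₀ _ (ne_of_gt hlogR)]
    rw [this, one_div, Real.log_inv, neg_neg]
  have h3 : Real.log Rl = c * Real.log R := by
    rw [hc, div_mul_cancel₀ _ (ne_of_gt hlogR)]
  have h4 : ((2:ℝ) ^ d + d - d * c - L) * Real.log R = 0 := by
    linear_combination (-1) * h1 + (-1) * h2 + d * h3
  have key : (2:ℝ) ^ d + d - d * c = L := by
    rcases mul_eq_zero.mp h4 with h | h
    · linarith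
    · exact absurd h (ne_of_gt hlogR)
  -- main argument, by contradiction
  by_contra hcon
  push_neg at hcon
  rw [hinv] at hcon
  have hL0pos : (0:ℝ) < L := by linarith
  have h2L : L < (2:ℝ) ^ (d - 1) := by
    calc L = (2:ℝ) ^ Real.logb 2 L := (Real.rpow_logb two_pos (by norm_num) hL0pos).symm
      _ < (2:ℝ) ^ (d - 1) := by
          rw [Real.rpow_lt_rpow_left_iff one_lt_two]; linarith
  have h2half : (2:ℝ) ^ (d - 1) = (2:ℝ) ^ d / 2 := by
    rw [Real.rpow_sub two_pos, Real.rpow_one]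
  rw [h2half] at h2L
  have hd1 : 1 < d := by
    have : (2:ℝ) ^ (1:ℝ) < (2:ℝ) ^ d := by
      rw [Real.rpow_one]; linarith
    rwa [Real.rpow_lt_rpow_left_iff one_lt_two] at this
  rcases le_or_gt c 1 with hc1 | hc1
  · -- c ≤ 1 : L = 2^d + d(1-c) ≥ 2^d > 2L, contradiction
    have : 0 ≤ d * (1 - c) := mul_nonneg (by linarith) (by linarith)
    nlinarith [key, h2L]
  · -- c > 1
    have hdc : L < d * c - d := by linarith [key, h2L]
    have hK : (c - 1) * (8 * (c - 1) / (Real.log 2) ^ 2) ≤ L :=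
      le_trans (le_max_right _ _) hLL
    have hdK : 8 * (c - 1) / (Real.log 2) ^ 2 < d := by
      have h5 : (c - 1) * (8 * (c - 1) / (Real.log 2) ^ 2) < (c - 1) * d := by
        have hring : (c - 1) * d = d * c - d := by ring
        linarith [hK, hdc]
      exact lt_of_mul_lt_mul_left h5 (by linarith)
    have hq : 8 * (c - 1) < d * (Real.log 2) ^ 2 := by
      rw [div_lt_iff₀ (by positivity)] at hdK; linarith
    -- 2^d ≥ (log 2 * d)^2 / 4
    have hd0 : 0 ≤ Real.log 2 * d := by positivity
    have hexp : (Real.log 2 * d) ^ 2 / 4 ≤ (2:ℝ) ^ d := by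
      rw [Real.rpow_def_of_pos two_pos]
      have he : Real.exp (Real.log 2 * d) = (Real.exp (Real.log 2 * d / 2)) ^ 2 := by
        rw [sq, ← Real.exp_add]; ring_nf
      have h6 : Real.log 2 * d / 2 ≤ Real.exp (Real.log 2 * d / 2) := by
        have := Real.add_one_le_exp (Real.log 2 * d / 2); linarith
      have h7 : (Real.log 2 * d / 2) ^ 2 ≤ (Real.exp (Real.log 2 * d / 2)) ^ 2 :=
        pow_le_pow_left₀ (by positivity) h6 2
      calc (Real.log 2 * d) ^ 2 / 4 = (Real.log 2 * d / 2) ^ 2 := by ring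
        _ ≤ (Real.exp (Real.log 2 * d / 2)) ^ 2 := h7
        _ = Real.exp (Real.log 2 * d) := he.symm
    have hdpos : (0:ℝ) < d := by linarith
    have hB : 2 * ((c - 1) * d) < (Real.log 2 * d) ^ 2 / 4 := by
      nlinarith [mul_lt_mul_of_pos_left hq hdpos]
    have hring2 : (c - 1) * d = d * c - d := by ring
    have hC : d * c - d < (2:ℝ) ^ d / 2 := by linarith [hB, hexp, hring2]
    linarith [key, h2L, hC]
end
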